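/- Let k be a perfect field of prime characteristic p, let R = k[x₁,…,x_d], and let f ∈ R be a nonzero polynomial whose support contains a squarefree monomial m such that some variable xᵢ divides m but divides no other monomial in the support of f. Then f has level one, i.e., I_1(f^{p−1}) = R. -/

import Mathlib

open MvPolynomial

/-- `J^[q]`: the ideal generated by the `q`-th powers of the elements of `J`. -/
def bracketPow {R : Type*} [CommRing R] (q : ℕ) (J : Ideal R) : Ideal R :=
  Ideal.span ((fun a => a ^ q) '' (J : Set R))

/-- `I_e(g)` (for the prime `p`): the smallest ideal `J` with `g ∈ J^[p^e]`. -/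
def rootIdeal {R : Type*} [CommRing R] (p e : ℕ) (g : R) : Ideal R :=
  sInf {J : Ideal R | g ∈ bracketPow (p ^ e) J}

/-- `f` has level `e`: `e` is the least integer `≥ 1` such that
`f^(p^e - p) ∈ (I_e(f^(p^e - 1)))^[p^e]`. -/
def HasLevel {R : Type*} [CommRing R] (p : ℕ) (f : R) (e : ℕ) : Prop :=
  IsLeast {e' : ℕ | 1 ≤ e' ∧
    f ^ (p ^ e' - p) ∈ bracketPow (p ^ e') (rootIdeal p e' (f ^ (p ^ e' - 1)))} e

namespace Stmt12Aux

variable {k : Type*} [CommRing k] {d : ℕ}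

lemma smul_inj (p : ℕ) (hp : 0 < p) :
    Function.Injective (fun β : Fin d →₀ ℕ => p • β) := by
  intro x y hxy
  ext j
  have := congrArg (fun z : Fin d →₀ ℕ => z j) hxy
  simp only [Finsupp.smul_apply, smul_eq_mul] at this
  exact Nat.eq_of_mul_eq_mul_left hp this

lemma e_inj (p : ℕ) (α₀ : Fin d →₀ ℕ) (hp : 0 < p) :
    Function.Injective (fun β : Fin d →₀ ℕ => p • β + α₀) := by
  intro x y hxy
  exact smul_inj p hp (add_right_cancel hxy)

/-- The `α₀`-slice: `slice g = ∑_β coeff (p•β+α₀) g • X^(p•β)`. -/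
noncomputable def slice (p : ℕ) (α₀ : Fin d →₀ ℕ) (hp : 0 < p)
    (g : MvPolynomial (Fin d) k) : MvPolynomial (Fin d) k :=
  Finsupp.embDomain ⟨fun β => p • β, smul_inj p hp⟩
    (Finsupp.comapDomain (fun β => p • β + α₀) (AddMonoidAlgebra.coeff g) ((e_inj p α₀ hp).injOn)) |> AddMonoidAlgebra.ofCoeff

variable (p : ℕ) (α₀ : Fin d →₀ ℕ) (hp : 0 < p)

lemma coeff_slice_smul (g : MvPolynomial (Fin d) k) (β : Fin d →₀ ℕ) :
    coeff (p • β) (slice p α₀ hp g) = coeff (p • β + α₀) g := by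
  show (Finsupp.embDomain ⟨fun β => p • β, smul_inj p hp⟩ (_ : (Fin d →₀ ℕ) →₀ k))
      ((⟨fun β : Fin d →₀ ℕ => p • β, smul_inj p hp⟩ : _ ↪ _) β) = _
  rw [Finsupp.embDomain_apply_self, Finsupp.comapDomain_apply]
  rfl

lemma coeff_slice_not (g : MvPolynomial (Fin d) k) (δ : Fin d →₀ ℕ)
    (hδ : ∀ β, δ ≠ p • β) : coeff δ (slice p α₀ hp g) = 0 := by
  refine Finsupp.embDomain_notin_range (_ : (Fin d →₀ ℕ) ↪ (Fin d →₀ ℕ)) (_ : (Fin d →₀ ℕ) →₀ k) _ ?_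
  rintro ⟨β, hβ⟩
  exact hδ β hβ.symm

lemma slice_eq_of_coeff (g h : MvPolynomial (Fin d) k)
    (H : ∀ β, coeff (p • β + α₀) g = coeff (p • β) h)
    (H2 : ∀ δ, (∀ β, δ ≠ p • β) → coeff δ h = 0) :
    slice p α₀ hp g = h := by
  apply MvPolynomial.ext
  intro δ
  by_cases hδ : ∃ β, δ = p • β
  · obtain ⟨β, rfl⟩ := hδ
    rw [coeff_slice_smul, H]
  · push_neg at hδ
    rw [coeff_slice_not p α₀ hp g δ hδ, H2 δ hδ]

lemma slice_add (g h : MvPolynomial (Fin d) k) :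
    slice p α₀ hp (g + h) = slice p α₀ hp g + slice p α₀ hp h := by
  apply MvPolynomial.ext
  intro δ
  by_cases hδ : ∃ β, δ = p • β
  · obtain ⟨β, rfl⟩ := hδ
    simp [coeff_add, coeff_slice_smul]
  · push_neg at hδ
    simp [coeff_add, coeff_slice_not p α₀ hp _ δ hδ]

lemma slice_zero : slice p α₀ hp (0 : MvPolynomial (Fin d) k) = 0 := by
  apply MvPolynomial.ext
  intro δ
  by_cases hδ : ∃ β, δ = p • β
  · obtain ⟨β, rfl⟩ := hδ
    simp [coeff_slice_smul]
  · push_neg at hδ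
    simp [coeff_slice_not p α₀ hp _ δ hδ]

/-- `slice` as an additive monoid hom. -/
noncomputable def sliceHom : MvPolynomial (Fin d) k →+ MvPolynomial (Fin d) k where
  toFun := slice p α₀ hp
  map_zero' := slice_zero p α₀ hp
  map_add' := slice_add p α₀ hp

lemma slice_monomial_mem (β : Fin d →₀ ℕ) (r : k) :
    slice p α₀ hp (monomial (p • β + α₀) r) = monomial (p • β) r := by
  classical
  refine slice_eq_of_coeff p α₀ hp _ _ (fun γ => ?_) (fun δ hδ => ?_)
  · rw [coeff_monomial, coeff_monomial]
    by_cases h : β = γ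
    · subst h; simp
    · rw [if_neg (fun hc => h (e_inj p α₀ hp hc)), if_neg (fun hc => h (smul_inj p hp hc))]
  · rw [coeff_monomial, if_neg (fun hc => hδ β hc.symm)]

lemma slice_monomial_not (δ : Fin d →₀ ℕ) (r : k)
    (hδ : ∀ β, δ ≠ p • β + α₀) : slice p α₀ hp (monomial δ r) = 0 := by
  classical
  refine slice_eq_of_coeff p α₀ hp _ _ (fun γ => ?_) (fun δ' hδ' => ?_)
  · rw [coeff_monomial, if_neg (fun hc => hδ γ hc), coeff_zero]
  · rw [coeff_zero]

lemma not_mem_range_add (hα : ∀ j, α₀ j < p) (u δ : Fin d →₀ ℕ)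
    (hδ : ∀ β, δ ≠ p • β + α₀) (β' : Fin d →₀ ℕ) :
    p • u + δ ≠ p • β' + α₀ := by
  intro hc
  have hle : ∀ j, u j ≤ β' j := by
    intro j
    by_contra hj
    push_neg at hj
    have h1 := congrArg (fun z : Fin d →₀ ℕ => z j) hc
    simp only [Finsupp.add_apply, Finsupp.smul_apply, smul_eq_mul] at h1
    have : p * β' j + α₀ j < p * u j := by
      calc p * β' j + α₀ j < p * β' j + p := Nat.add_lt_add_left (hα j) _
        _ = p * (β' j + 1) := by ring
        _ ≤ p * u j := Nat.mul_le_mul_left p hj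
    omega
  apply hδ (β' - u)
  ext j
  have h1 := congrArg (fun z : Fin d →₀ ℕ => z j) hc
  simp only [Finsupp.add_apply, Finsupp.smul_apply, smul_eq_mul] at h1 ⊢
  have hlej := hle j
  have h2 : p * (β' j - u j) + p * u j = p * β' j := by
    rw [← Nat.mul_add]
    congr 1
    omega
  rw [Finsupp.tsub_apply]
  omega

lemma slice_pow_mul [Fact p.Prime] [CharP k p] (hα : ∀ j, α₀ j < p)
    (a g : MvPolynomial (Fin d) k) :
    slice p α₀ hp (a ^ p * g) = a ^ p * slice p α₀ hp g := by
  classical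
  induction a using MvPolynomial.induction_on' generalizing g with
  | add a b ha hb =>
    rw [add_pow_char, add_mul, slice_add, ha, hb]
    ring
  | monomial u s =>
    induction g using MvPolynomial.induction_on' with
    | add g1 g2 hg1 hg2 =>
      rw [mul_add, slice_add, hg1, hg2, slice_add, mul_add]
    | monomial δ r =>
      rw [monomial_pow, monomial_mul]
      by_cases hδ : ∃ β, δ = p • β + α₀
      · obtain ⟨β, rfl⟩ := hδ
        have h1 : p • u + (p • β + α₀) = p • (u + β) + α₀ := by
          rw [smul_add, add_assoc]
        rw [h1, slice_monomial_mem, slice_monomial_mem, monomial_mul, smul_add]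
      · push_neg at hδ
        rw [slice_monomial_not p α₀ hp _ _ (not_mem_range_add p α₀ hα u δ hδ),
          slice_monomial_not p α₀ hp _ _ hδ, mul_zero]

end Stmt12Aux

open Stmt12Aux

/-- If the support of a nonzero `f ∈ k[x₁,…,x_d]` contains a squarefree monomial `m` such
that some variable `xᵢ` divides `m` but divides no other monomial of the support of `f`,
then `f` has level one, i.e. `I_1(f^(p-1)) = R`. -/
theorem stmt_12 (p : ℕ) [Fact p.Prime] (k : Type*) [Field k] [CharP k p] [PerfectField k]
    (d : ℕ) (f : MvPolynomial (Fin d) k) (hf : f ≠ 0)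
    (hm : ∃ m ∈ f.support, (∀ i, m i ≤ 1) ∧
      ∃ i, m i = 1 ∧ ∀ m' ∈ f.support, m' ≠ m → m' i = 0) :
    rootIdeal p 1 (f ^ (p - 1)) = ⊤ := by
  classical
  obtain ⟨m, hmf, hsf, i, hmi, honly⟩ := hm
  have hpprime : p.Prime := Fact.out
  have hp : 0 < p := hpprime.pos
  set c : k := coeff m f with hc_def
  have hc : c ≠ 0 := by rwa [MvPolynomial.mem_support_iff] at hmf
  set h : MvPolynomial (Fin d) k := f - monomial m c with hh_def
  have hfe : f = monomial m c + h := by rw [hh_def]; ring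
  set α₀ : Fin d →₀ ℕ := (p - 1) • m with hα₀_def
  have hα : ∀ j, α₀ j < p := by
    intro j
    rw [hα₀_def]
    simp only [Finsupp.smul_apply, smul_eq_mul]
    calc (p - 1) * m j ≤ (p - 1) * 1 := Nat.mul_le_mul_left _ (hsf j)
      _ < p := by omega
  have hα₀i : α₀ i = p - 1 := by
    rw [hα₀_def]; simp [hmi]
  -- coefficients of h have i-th exponent zero
  have hh : ∀ δ, δ i ≠ 0 → coeff δ h = 0 := by
    intro δ hδi
    have hδm : δ ≠ m → coeff δ f = 0 := by
      intro hne
      by_contra hcf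
      exact hδi (honly δ (MvPolynomial.mem_support_iff.mpr hcf) hne)
    rw [hh_def, MvPolynomial.coeff_sub, coeff_monomial]
    by_cases hδ : δ = m
    · subst hδ; simp [hc_def]
    · rw [if_neg (fun hx => hδ hx.symm), hδm hδ, sub_zero]
  have hhn : ∀ n δ, δ i ≠ 0 → coeff δ (h ^ n) = 0 := by
    intro n
    induction n with
    | zero =>
      intro δ hδ
      rw [pow_zero, MvPolynomial.coeff_one, if_neg]
      intro hx
      exact hδ (by rw [← hx]; rfl)
    | succ n ih =>
      intro δ hδ
      rw [pow_succ, coeff_mul]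
      refine Finset.sum_eq_zero fun x hx => ?_
      rw [Finset.HasAntidiagonal.mem_antidiagonal] at hx
      have hsum : x.1 i + x.2 i = δ i := by rw [← Finsupp.add_apply, hx]
      by_cases h1 : x.1 i = 0
      · have h2 : x.2 i ≠ 0 := by omega
        rw [hh _ h2, mul_zero]
      · rw [ih _ h1, zero_mul]
  -- key coefficient computation
  have key : ∀ β : Fin d →₀ ℕ,
      coeff (p • β + α₀) (f ^ (p - 1)) = if β = 0 then c ^ (p - 1) else 0 := by
    intro β
    have hβi : (p • β + α₀) i = p * β i + (p - 1) := by
      simp [Finsupp.add_apply, Finsupp.smul_apply, hα₀i]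
    rw [hfe, add_pow, MvPolynomial.coeff_sum]
    rw [Finset.sum_eq_single (p - 1)]
    · rw [Nat.sub_self, pow_zero, mul_one, Nat.choose_self, Nat.cast_one, mul_one,
        monomial_pow, coeff_monomial]
      have hiff : (p - 1) • m = p • β + α₀ ↔ β = 0 := by
        constructor
        · intro hx
          have : p • β + α₀ = p • 0 + α₀ := by
            rw [smul_zero, zero_add, ← hx, hα₀_def]
          exact e_inj p α₀ hp this
        · intro hx
          rw [hx, smul_zero, zero_add, hα₀_def]
      by_cases hb : β = 0
      · rw [if_pos (hiff.mpr hb), if_pos hb]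
      · rw [if_neg (fun hx => hb (hiff.mp hx)), if_neg hb]
    · intro j hj hjne
      rw [Finset.mem_range] at hj
      have hjlt : j < p - 1 := by omega
      rw [← MvPolynomial.C_eq_coe_nat, mul_comm, ← mul_assoc]
      rw [show C (↑((p-1).choose j) : k) * (monomial m c) ^ j * h ^ (p - 1 - j)
          = C (↑((p-1).choose j) : k) * ((monomial m c) ^ j * h ^ (p - 1 - j)) by ring]
      rw [MvPolynomial.coeff_C_mul]
      rw [monomial_pow, coeff_mul]
      rw [Finset.sum_eq_zero, mul_zero]
      intro x hx
      rw [Finset.HasAntidiagonal.mem_antidiagonal] at hx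
      by_cases hu : j • m = x.1
      · have hx1i : x.1 i = j := by
          rw [← hu]; simp [Finsupp.smul_apply, hmi]
        have hsum : x.1 i + x.2 i = p * β i + (p - 1) := by
          rw [← Finsupp.add_apply, hx, hβi]
        have hx2 : x.2 i ≠ 0 := by omega
        rw [hhn _ _ hx2, mul_zero]
      · rw [coeff_monomial, if_neg hu, zero_mul]
    · intro hnm
      exfalso
      exact hnm (Finset.mem_range.mpr (by omega))
  -- slice of f^(p-1) is the constant c^(p-1)
  have hslice : slice p α₀ hp (f ^ (p - 1)) = C (c ^ (p - 1)) := by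
    refine slice_eq_of_coeff p α₀ hp _ _ (fun β => ?_) (fun δ hδ => ?_)
    · rw [key β, MvPolynomial.coeff_C]
      have hiff : p • β = 0 ↔ β = 0 := by
        constructor
        · intro hx
          exact smul_inj p hp (show p • β = p • 0 by rw [hx, smul_zero])
        · intro hx; rw [hx, smul_zero]
      by_cases hb : β = 0
      · subst hb
        simp
      · rw [if_neg hb, if_neg (fun hx => hb (hiff.mp hx.symm))]
    · rw [MvPolynomial.coeff_C, if_neg]
      intro hx
      exact hδ 0 (by rw [← hx, smul_zero])

  -- now the main argument
  rw [rootIdeal, sInf_eq_top]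
  intro J hJ
  simp only [Set.mem_setOf_eq, pow_one] at hJ
  have hJ' : f ^ (p - 1) ∈ Submodule.span (MvPolynomial (Fin d) k)
      ((fun a => a ^ p) '' (J : Set (MvPolynomial (Fin d) k))) := hJ
  obtain ⟨cc, hcsupp, hsum⟩ := Submodule.mem_span_set.mp hJ'
  have hmem : C (c ^ (p - 1)) ∈ J := by
    rw [← hslice, ← hsum, Finsupp.sum]
    rw [show slice p α₀ hp (∑ x ∈ cc.support, cc x • x)
        = ∑ x ∈ cc.support, slice p α₀ hp (cc x • x) from
      map_sum (sliceHom p α₀ hp) (fun x => cc x • x) cc.support]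
    refine Ideal.sum_mem J fun x hx => ?_
    obtain ⟨a, haJ, hax⟩ := hcsupp hx
    have : cc x • x = a ^ p * cc x := by
      rw [smul_eq_mul, ← hax, mul_comm]
    rw [this, slice_pow_mul p α₀ hp hα]
    exact Ideal.mul_mem_right _ J (Ideal.pow_mem_of_mem J haJ p hp)
  have h1 : (1 : MvPolynomial (Fin d) k) ∈ J := by
    have := Ideal.mul_mem_left J (C ((c ^ (p - 1))⁻¹)) hmem
    rwa [← C_mul, inv_mul_cancel₀ (pow_ne_zero _ hc), C_1] at this
  exact Ideal.eq_top_iff_one J |>.mpr h1
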